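/- Let Γ be a graph whose vertex set is partitioned into four 4-cycles C1, C2, C3, C4, such that between consecutive cycles (C1,C2), (C2,C3), (C3,C4), (C4,C1) every vertex x of one cycle is adjacent to exactly the two vertices of an edge of the next cycle, with distinct vertices of a cycle being assigned distinct edges of the next cycle consecutively (type (1) connection), and no other edges between different cycles. Then Γ is a 6-regular graph on 16 vertices in which every edge lies in exactly 2 triangles. -/

import Mathlib

def Pfun (c : Fin 4 → Fin 4) (v w : Fin 4 × Fin 4) : Prop :=
  (v.1 = w.1 ∧ (w.2 = v.2 + 1 ∨ v.2 = w.2 + 1)) ∨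
  (w.1 = v.1 + 1 ∧ (w.2 = c v.1 + v.2 ∨ w.2 = c v.1 + v.2 + 1)) ∨
  (v.1 = w.1 + 1 ∧ (v.2 = c w.1 + w.2 ∨ v.2 = c w.1 + w.2 + 1))

instance (c : Fin 4 → Fin 4) (v : Fin 4 × Fin 4) : DecidablePred (Pfun c v) := fun w => by
  unfold Pfun; infer_instance

set_option maxHeartbeats 4000000 in
set_option maxRecDepth 100000 in
lemma Pmain : ∀ s : Fin 4,
    (∀ v, (Finset.univ.filter (Pfun ![0,0,0,s] v)).card = 6) ∧
    (∀ v w, Pfun ![0,0,0,s] v w →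
      (Finset.univ.filter (fun u => Pfun ![0,0,0,s] v u ∧ Pfun ![0,0,0,s] w u)).card = 2) := by
  decide

open Fin.CommRing in
lemma Ptrans (c t d : Fin 4 → Fin 4) (hd : ∀ k, d k + t k = c k + t (k + 1))
    (v w : Fin 4 × Fin 4) :
    Pfun c v w ↔ Pfun d (v.1, v.2 + t v.1) (w.1, w.2 + t w.1) := by
  obtain ⟨i, a⟩ := v
  obtain ⟨j, b⟩ := w
  dsimp only [Pfun]
  apply or_congr
  · refine and_congr_right fun h => ?_
    subst h
    apply or_congr
    · rw [show a + t i + 1 = (a + 1) + t i by ring, add_left_inj]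
    · rw [show b + t i + 1 = (b + 1) + t i by ring, add_left_inj]
  apply or_congr
  · refine and_congr_right fun h => ?_
    subst h
    apply or_congr
    · rw [show d i + (a + t i) = (c i + a) + t (i + 1) by linear_combination hd i,
        add_left_inj]
    · rw [show d i + (a + t i) + 1 = (c i + a + 1) + t (i + 1) by linear_combination hd i,
        add_left_inj]
  · refine and_congr_right fun h => ?_
    subst h
    apply or_congr
    · rw [show d j + (b + t j) = (c j + b) + t (j + 1) by linear_combination hd j,
        add_left_inj]
    · rw [show d j + (b + t j) + 1 = (c j + b + 1) + t (j + 1) by linear_combination hd j,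
        add_left_inj]

lemma ha4 : ∀ x : Fin 4, x = 0 ∨ x = 1 ∨ x = 2 ∨ x = 3 := by decide

open Fin.CommRing in
lemma Pmain' (c : Fin 4 → Fin 4) :
    (∀ v, (Finset.univ.filter (Pfun c v)).card = 6) ∧
    (∀ v w, Pfun c v w →
      (Finset.univ.filter (fun u => Pfun c v u ∧ Pfun c w u)).card = 2) := by
  set tt : Fin 4 → Fin 4 := ![0, -c 0, -c 0 - c 1, -c 0 - c 1 - c 2] with htt
  set S : Fin 4 := c 3 + c 0 + c 1 + c 2 with hS
  have hd : ∀ k, (![0, 0, 0, S] : Fin 4 → Fin 4) k + tt k = c k + tt (k + 1) := by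
    intro k
    rcases ha4 k with h | h | h | h <;> subst h
    · show (0 : Fin 4) + 0 = c 0 + -c 0
      ring
    · show (0 : Fin 4) + -c 0 = c 1 + (-c 0 - c 1)
      ring
    · show (0 : Fin 4) + (-c 0 - c 1) = c 2 + (-c 0 - c 1 - c 2)
      ring
    · show c 3 + c 0 + c 1 + c 2 + (-c 0 - c 1 - c 2) = c 3 + 0
      ring
  set e : (Fin 4 × Fin 4) ≃ (Fin 4 × Fin 4) :=
    ⟨fun w => (w.1, w.2 + tt w.1), fun w => (w.1, w.2 - tt w.1),
     fun w => by simp, fun w => by simp⟩ with heq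
  have he : ∀ w : Fin 4 × Fin 4, e w = (w.1, w.2 + tt w.1) := fun w => rfl
  have key : ∀ v w : Fin 4 × Fin 4, Pfun c v w ↔
      Pfun ![0, 0, 0, S] (v.1, v.2 + tt v.1) (w.1, w.2 + tt w.1) :=
    Ptrans c tt ![0, 0, 0, S] hd
  obtain ⟨h6, h2⟩ := Pmain S
  constructor
  · intro v
    rw [Finset.card_equiv e (t := Finset.univ.filter
        (Pfun ![0, 0, 0, S] (v.1, v.2 + tt v.1)))
      (fun w => by simp only [Finset.mem_filter, Finset.mem_univ, true_and, he]
                   exact key v w)]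
    exact h6 _
  · intro v w hvw
    rw [Finset.card_equiv e (t := Finset.univ.filter
        (fun u => Pfun ![0, 0, 0, S] (v.1, v.2 + tt v.1) u ∧
                  Pfun ![0, 0, 0, S] (w.1, w.2 + tt w.1) u))
      (fun u => by simp only [Finset.mem_filter, Finset.mem_univ, true_and, he]
                   exact and_congr (key v u) (key w u))]
    exact h2 _ _ ((key v w).mp hvw)

lemma hne4 : ∀ k : Fin 4, k ≠ k + 1 ∧ k ≠ k + 1 + 1 ∧ k + 1 ≠ k ∧ k ≠ k + 2 ∧
    k + 2 ≠ k + 1 ∧ k ≠ k + 2 + 1 := by decide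

lemma hj4 : ∀ i j : Fin 4, j = i ∨ j = i + 1 ∨ i = j + 1 ∨ j = i + 2 := by decide

theorem type1_stacking (G : SimpleGraph (Fin 4 × Fin 4)) [DecidableRel G.Adj]
    -- each cycle `{i} × Fin 4` induces a 4-cycle
    (hcyc : ∀ (i : Fin 4) (a b : Fin 4),
      G.Adj (i, a) (i, b) ↔ (b = a + 1 ∨ a = b + 1))
    -- type (1) connections between consecutive cycles: vertex a of cycle i is
    -- adjacent exactly to the edge {f i a, f i a + 1} of cycle i+1, with
    -- consecutive vertices assigned consecutive edges
    (f : Fin 4 → Fin 4 → Fin 4)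
    (hf : ∀ (i : Fin 4) (a : Fin 4), f i (a + 1) = f i a + 1)
    (hnext : ∀ (i : Fin 4) (a b : Fin 4),
      G.Adj (i, a) (i + 1, b) ↔ (b = f i a ∨ b = f i a + 1))
    -- no edges between non-consecutive cycles
    (hfar : ∀ (i : Fin 4) (a b : Fin 4), ¬ G.Adj (i, a) (i + 2, b)) :
    Fintype.card (Fin 4 × Fin 4) = 16 ∧
    G.IsRegularOfDegree 6 ∧
    (∀ u v : Fin 4 × Fin 4, G.Adj u v →
      Fintype.card (G.commonNeighbors u v) = 2) := by
  have hfa : ∀ i a, f i a = f i 0 + a := by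
    intro i a
    have h1 : f i 1 = f i 0 + 1 := hf i 0
    have h2 : f i 2 = f i 1 + 1 := hf i 1
    have h3 : f i 3 = f i 2 + 1 := hf i 2
    rcases ha4 a with h | h | h | h <;> subst h <;> omega
  have hAdj : ∀ v w, G.Adj v w ↔ Pfun (fun k => f k 0) v w := by
    rintro ⟨i, a⟩ ⟨j, b⟩
    rcases hj4 i j with h | h | h | h
    · subst h
      rw [hcyc]
      dsimp only [Pfun]
      constructor
      · exact fun h2 => Or.inl ⟨rfl, h2⟩
      · rintro (⟨_, h2⟩ | ⟨h1, _⟩ | ⟨h1, _⟩)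
        · exact h2
        · exact absurd h1 (hne4 j).1
        · exact absurd h1 (hne4 j).1
    · subst h
      rw [hnext, hfa]
      dsimp only [Pfun]
      constructor
      · exact fun h2 => Or.inr (Or.inl ⟨rfl, h2⟩)
      · rintro (⟨h1, _⟩ | ⟨_, h2⟩ | ⟨h1, _⟩)
        · exact absurd h1 (hne4 i).1
        · exact h2
        · exact absurd h1 (hne4 i).2.1
    · subst h
      rw [G.adj_comm, hnext, hfa]
      dsimp only [Pfun]
      constructor
      · exact fun h2 => Or.inr (Or.inr ⟨rfl, h2⟩)
      · rintro (⟨h1, _⟩ | ⟨h1, _⟩ | ⟨_, h2⟩)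
        · exact absurd h1 (hne4 j).2.2.1
        · exact absurd h1 (hne4 j).2.1
        · exact h2
    · subst h
      dsimp only [Pfun]
      constructor
      · exact fun h2 => absurd h2 (hfar i a b)
      · rintro (⟨h1, _⟩ | ⟨h1, _⟩ | ⟨h1, _⟩)
        · exact absurd h1 (hne4 i).2.2.2.1
        · exact absurd h1 (hne4 i).2.2.2.2.1
        · exact absurd h1 (hne4 i).2.2.2.2.2
  obtain ⟨h6, h2⟩ := Pmain' (fun k => f k 0)
  refine ⟨rfl, ?_, ?_⟩
  · intro v
    have hn : G.neighborFinset v = Finset.univ.filter (Pfun (fun k => f k 0) v) := by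
      ext w
      simp [SimpleGraph.mem_neighborFinset, hAdj]
    rw [SimpleGraph.degree, hn]
    exact h6 v
  · intro u v huv
    have hn : (G.commonNeighbors u v).toFinset =
        Finset.univ.filter (fun x => Pfun (fun k => f k 0) u x ∧ Pfun (fun k => f k 0) v x) := by
      ext x
      simp [SimpleGraph.mem_commonNeighbors, hAdj]
    rw [← Set.toFinset_card, hn]
    exact h2 u v ((hAdj u v).mp huv)
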